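/- Let (X,d,μ) be a metric measure space whose porous sets are μ-null, and let (U,φ) be a rectifiable chart of dimension n in X. Let (Y,d_Y) be a metric space and f : X → Y a map. Then for μ-almost every x ∈ U ∩ S(f) at which there exists a seminorm md_x f with limsup_{U∋y→x} |d_Y(f(x),f(y)) − md_x f(φ(x)−φ(y))|/d(x,y) = 0, the same limsup taken over all y ∈ X (not just y ∈ U) is also 0; i.e., weak metric differentiability upgrades to full metric differentiability a.e. on U ∩ S(f). -/

import Mathlib

open Filter MeasureTheory

/-- Porous sets. -/
def Porous {X : Type*} [MetricSpace X] (S : Set X) : Prop :=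
  ∀ x ∈ S, ∃ η > (0 : ℝ), ∃ xs : ℕ → X,
    Filter.Tendsto xs Filter.atTop (nhds x) ∧
    ∀ j, η * dist (xs j) x ≤ Metric.infDist (xs j) S

/-- Pointwise Lipschitz constant (in `ℝ≥0∞`). -/
noncomputable def lipConst {X Y : Type*} [MetricSpace X] [MetricSpace Y]
    (f : X → Y) (x : X) : ENNReal :=
  Filter.limsup (fun y => ENNReal.ofReal (dist (f x) (f y) / dist x y)) (nhdsWithin x {x}ᶜ)

/-- Any seminorm on a Euclidean space is dominated by a multiple of the norm. -/
lemma seminorm_bound_aux {n : ℕ} (md : Seminorm ℝ (EuclideanSpace ℝ (Fin n))) :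
    ∃ C : ℝ, 0 ≤ C ∧ ∀ v, md v ≤ C * ‖v‖ := by
  classical
  refine ⟨∑ i : Fin n, md (EuclideanSpace.single i (1 : ℝ)),
    Finset.sum_nonneg fun i _ => apply_nonneg _ _, fun v => ?_⟩
  have hv : ∑ i : Fin n, v i • EuclideanSpace.single i (1 : ℝ) = v := by
    simpa [EuclideanSpace.basisFun_apply, EuclideanSpace.basisFun_repr] using
      (EuclideanSpace.basisFun (Fin n) ℝ).sum_repr v
  have hcoord : ∀ i : Fin n, |v i| ≤ ‖v‖ := by
    intro i
    rw [EuclideanSpace.norm_eq v]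
    have h1 : |v i| = Real.sqrt (‖v i‖ ^ 2) := by
      rw [Real.sqrt_sq_eq_abs]; simp [Real.norm_eq_abs]
    rw [h1]
    apply Real.sqrt_le_sqrt
    exact Finset.single_le_sum (f := fun j => ‖v j‖ ^ 2)
      (fun j _ => sq_nonneg _) (Finset.mem_univ i)
  calc md v = md (∑ i : Fin n, v i • EuclideanSpace.single i (1 : ℝ)) := by rw [hv]
    _ ≤ ∑ i : Fin n, md (v i • EuclideanSpace.single i (1 : ℝ)) :=
        Finset.le_sum_of_subadditive md (map_zero md).le (map_add_le_add md) _ _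
    _ = ∑ i : Fin n, |v i| * md (EuclideanSpace.single i (1 : ℝ)) := by
        simp [map_smul_eq_mul, Real.norm_eq_abs]
    _ ≤ ∑ i : Fin n, ‖v‖ * md (EuclideanSpace.single i (1 : ℝ)) := by
        apply Finset.sum_le_sum
        intro i _
        exact mul_le_mul_of_nonneg_right (hcoord i) (apply_nonneg _ _)
    _ = (∑ i : Fin n, md (EuclideanSpace.single i (1 : ℝ))) * ‖v‖ := by
        rw [Finset.sum_mul]
        exact Finset.sum_congr rfl fun i _ => mul_comm _ _

/-- Density lemma: in a space where porous sets are null, for any set `E` and a.e. `x ∈ E`,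
points near `x` are approximable by points of `E` at sublinear distance. -/
lemma density_aux {X : Type*} [MetricSpace X] [MeasurableSpace X] (μ : Measure X)
    (hpor : ∀ S : Set X, Porous S → μ S = 0) (E : Set X) :
    ∀ᵐ x ∂μ, x ∈ E → ∀ δ : ℝ, 0 < δ →
      ∀ᶠ y in nhdsWithin x {x}ᶜ, Metric.infDist y E ≤ δ * dist x y := by
  set P : Set X := {x | x ∈ E ∧ ¬ (∀ δ : ℝ, 0 < δ →
      ∀ᶠ y in nhdsWithin x {x}ᶜ, Metric.infDist y E ≤ δ * dist x y)} with hPdef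
  have hP : Porous P := by
    rintro x ⟨hxE, hx⟩
    have hx0 := hx
    push_neg at hx
    obtain ⟨δ, hδ, hfreq⟩ := hx
    have hfreq' : ∃ᶠ y in nhdsWithin x {x}ᶜ, δ * dist x y < Metric.infDist y E :=
      (Filter.not_eventually.mp hfreq).mono fun y hy => not_not.mp hy
    have hsel : ∀ j : ℕ, ∃ y : X, dist y x < 1 / (j + 1) ∧
        δ * dist x y < Metric.infDist y E := by
      intro j
      have hball : ∀ᶠ y in nhdsWithin x {x}ᶜ, dist y x < 1 / (j + 1 : ℝ) := by
        refine Filter.Eventually.filter_mono nhdsWithin_le_nhds ?_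
        exact Metric.eventually_nhds_iff.mpr ⟨1 / (j + 1 : ℝ), by positivity, fun y hy => hy⟩
      obtain ⟨y, hy1, hy2⟩ := (hfreq'.and_eventually hball).exists
      exact ⟨y, hy2, hy1⟩
    choose xs h1 h2 using hsel
    refine ⟨δ, hδ, xs, ?_, ?_⟩
    · rw [Metric.tendsto_atTop]
      intro ε hε
      obtain ⟨N, hN⟩ := exists_nat_one_div_lt hε
      refine ⟨N, fun m hm => lt_of_lt_of_le (h1 m) (le_trans ?_ hN.le)⟩
      apply one_div_le_one_div_of_le (by positivity)
      exact_mod_cast Nat.add_le_add_right hm 1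
    · intro j
      have hsub : Metric.infDist (xs j) E ≤ Metric.infDist (xs j) P :=
        Metric.infDist_le_infDist_of_subset (fun z hz => hz.1) ⟨x, hxE, hx0⟩
      calc δ * dist (xs j) x = δ * dist x (xs j) := by rw [dist_comm]
        _ ≤ Metric.infDist (xs j) E := (h2 j).le
        _ ≤ Metric.infDist (xs j) P := hsub
  have h0 : μ P = 0 := hpor P hP
  rw [ae_iff]
  refine measure_mono_null ?_ h0
  intro x hx
  simp only [Set.mem_setOf_eq] at hx ⊢
  rw [Classical.not_imp] at hx
  exact ⟨hx.1, hx.2⟩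

/-- The set of points where `f` is `(K+1)`-Lipschitz within radius `1/(K+1)`. -/
def lipSet {X Y : Type*} [MetricSpace X] [MetricSpace Y] (f : X → Y) (K : ℕ) : Set X :=
  {x | ∀ y, dist x y ≤ 1 / ((K : ℝ) + 1) → dist (f x) (f y) ≤ ((K : ℝ) + 1) * dist x y}

lemma mem_lipSet {X Y : Type*} [MetricSpace X] [MetricSpace Y] {f : X → Y} {x : X}
    (h : lipConst f x < ⊤) : ∃ K : ℕ, x ∈ lipSet f K := by
  have hne : lipConst f x ≠ ⊤ := h.ne
  have h1 : lipConst f x < lipConst f x + 1 := ENNReal.lt_add_right hne one_ne_zero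
  have h2 : ∀ᶠ y in nhdsWithin x {x}ᶜ,
      ENNReal.ofReal (dist (f x) (f y) / dist x y) < lipConst f x + 1 :=
    Filter.eventually_lt_of_limsup_lt h1
  set b := (lipConst f x + 1).toReal with hb
  have h3 : ∀ᶠ y in nhdsWithin x {x}ᶜ, dist (f x) (f y) / dist x y ≤ b := by
    refine h2.mono fun y hy => ?_
    exact (ENNReal.ofReal_le_iff_le_toReal (ENNReal.add_ne_top.mpr ⟨hne, ENNReal.one_ne_top⟩)).mp
      hy.le
  rw [eventually_nhdsWithin_iff, Metric.eventually_nhds_iff] at h3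
  obtain ⟨r, hr, h4⟩ := h3
  obtain ⟨M, hM⟩ := exists_nat_one_div_lt hr
  obtain ⟨N, hN⟩ := exists_nat_gt b
  refine ⟨max M N, fun y hy => ?_⟩
  by_cases hxy : y = x
  · simp [hxy]
  have hpos : 0 < dist x y := dist_pos.mpr fun h => hxy h.symm
  have hdy : dist y x < r := by
    rw [dist_comm]
    refine lt_of_le_of_lt (le_trans hy ?_) hM
    apply one_div_le_one_div_of_le (by positivity)
    have : (M : ℝ) ≤ ((max M N : ℕ) : ℝ) := Nat.cast_le.mpr (le_max_left M N)
    linarith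
  have h5 : dist (f x) (f y) / dist x y ≤ b := h4 hdy (by simpa using hxy)
  have h6 : b ≤ ((max M N : ℕ) : ℝ) + 1 := by
    have : (N : ℝ) ≤ ((max M N : ℕ) : ℝ) := Nat.cast_le.mpr (le_max_right M N)
    linarith
  calc dist (f x) (f y) = dist (f x) (f y) / dist x y * dist x y := by
        field_simp
    _ ≤ b * dist x y := mul_le_mul_of_nonneg_right h5 hpos.le
    _ ≤ (((max M N : ℕ) : ℝ) + 1) * dist x y := mul_le_mul_of_nonneg_right h6 hpos.le

set_option maxHeartbeats 2000000 in
/-- in a space whose porous sets are null, for a rectifiable chart `(U,φ)` and any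
map `f : X → Y`, at `μ`-a.e. point `x ∈ U ∩ S(f)` weak metric differentiability (limsup over
`y ∈ U`) upgrades to full metric differentiability (limsup over all `y ∈ X`), with the same
seminorm. -/
theorem stmt_10 {X Y : Type*} [MetricSpace X] [MeasurableSpace X] [BorelSpace X]
    [MetricSpace Y] (μ : Measure X)
    (hpor : ∀ S : Set X, Porous S → μ S = 0)
    {n : ℕ} (U : Set X) (hU : MeasurableSet U)
    (φ : X → EuclideanSpace ℝ (Fin n)) (L : NNReal) (hφ : LipschitzWith L φ)
    (c : ℝ) (hc : 0 < c)
    (hbilip : ∀ x ∈ U, ∀ y ∈ U, dist x y ≤ c * dist (φ x) (φ y))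
    (hac : (μ.restrict U).map φ ≪ volume.restrict (φ '' U))
    (f : X → Y) :
    ∀ᵐ x ∂μ, x ∈ U → lipConst f x < ⊤ →
      ∀ md : Seminorm ℝ (EuclideanSpace ℝ (Fin n)),
        Filter.limsup (fun y => |dist (f x) (f y) - md (φ x - φ y)| / dist x y)
            (nhdsWithin x (U \ {x})) = 0 →
        Filter.limsup (fun y => |dist (f x) (f y) - md (φ x - φ y)| / dist x y)
            (nhdsWithin x {x}ᶜ) = 0 := by
  have hden : ∀ᵐ x ∂μ, ∀ K : ℕ, x ∈ U ∩ lipSet f K → ∀ δ : ℝ, 0 < δ →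
      ∀ᶠ y in nhdsWithin x {x}ᶜ, Metric.infDist y (U ∩ lipSet f K) ≤ δ * dist x y := by
    rw [ae_all_iff]
    intro K
    exact density_aux μ hpor (U ∩ lipSet f K)
  filter_upwards [hden] with x hx hxU hlip md hweak
  obtain ⟨K, hK⟩ := mem_lipSet hlip
  have hxA : x ∈ U ∩ lipSet f K := ⟨hxU, hK⟩
  obtain ⟨C, hC0, hC⟩ := seminorm_bound_aux md
  obtain ⟨Kr, hKr0, hKrprop⟩ : ∃ Kr : ℝ, 0 < Kr ∧ ∀ z ∈ lipSet f K, ∀ w,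
      dist z w ≤ 1 / Kr → dist (f z) (f w) ≤ Kr * dist z w :=
    ⟨(K : ℝ) + 1, by positivity, fun z hz w hw => hz w hw⟩
  obtain ⟨Lr, hLr0, hLrprop⟩ : ∃ Lr : ℝ, 0 ≤ Lr ∧ ∀ a b : X,
      dist (φ a) (φ b) ≤ Lr * dist a b :=
    ⟨(L : ℝ), L.coe_nonneg, fun a b => hφ.dist_le_mul a b⟩
  -- a global eventual bound near x
  have hbdd : ∀ᶠ y in nhdsWithin x {x}ᶜ,
      |dist (f x) (f y) - md (φ x - φ y)| / dist x y ≤ Kr + C * Lr := by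
    have hball : ∀ᶠ y in nhdsWithin x {x}ᶜ, dist y x < 1 / Kr :=
      Filter.Eventually.filter_mono nhdsWithin_le_nhds
        (Metric.eventually_nhds_iff.mpr ⟨1 / Kr, by positivity, fun y hy => hy⟩)
    filter_upwards [hball, eventually_mem_nhdsWithin] with y hy hyx
    have hyx' : y ≠ x := hyx
    have hd : 0 < dist x y := dist_pos.mpr fun h => hyx' h.symm
    have hfb : dist (f x) (f y) ≤ Kr * dist x y :=
      hKrprop x hK y (by rw [dist_comm]; exact hy.le)
    have hmb : md (φ x - φ y) ≤ C * Lr * dist x y := by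
      calc md (φ x - φ y) ≤ C * ‖φ x - φ y‖ := hC _
        _ = C * dist (φ x) (φ y) := by rw [dist_eq_norm]
        _ ≤ C * (Lr * dist x y) := mul_le_mul_of_nonneg_left (hLrprop x y) hC0
        _ = C * Lr * dist x y := by ring
    have hmd0 : (0 : ℝ) ≤ md (φ x - φ y) := apply_nonneg md _
    have hdf0 : (0 : ℝ) ≤ dist (f x) (f y) := dist_nonneg
    rw [div_le_iff₀ hd, abs_le]
    constructor <;> nlinarith
  have hbddU : IsBoundedUnder (· ≤ ·) (nhdsWithin x (U \ {x}))
      (fun y => |dist (f x) (f y) - md (φ x - φ y)| / dist x y) := by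
    refine ⟨Kr + C * Lr, ?_⟩
    rw [Filter.eventually_map]
    exact hbdd.filter_mono (nhdsWithin_mono x fun y hy => hy.2)
  -- the key estimate
  have key : ∀ ε : ℝ, 0 < ε → ∀ᶠ y in nhdsWithin x {x}ᶜ,
      |dist (f x) (f y) - md (φ x - φ y)| / dist x y < ε := by
    intro ε hε
    obtain ⟨M, hM0, hMge⟩ : ∃ M : ℝ, 0 < M ∧ Kr + C * Lr ≤ M :=
      ⟨Kr + C * Lr + 1, by positivity, by linarith⟩
    obtain ⟨δ, hδ0, hδ1, hδ2⟩ : ∃ δ : ℝ, 0 < δ ∧ δ * (8 * M) ≤ ε ∧ δ ≤ 1 / 4 := by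
      refine ⟨min (ε / (8 * M)) (1 / 4), lt_min (by positivity) (by norm_num),
        ?_, min_le_right _ _⟩
      have h := min_le_left (ε / (8 * M)) (1 / 4)
      have h2 : ε / (8 * M) * (8 * M) = ε := div_mul_cancel₀ ε (by positivity)
      nlinarith
    -- weak differentiability gives control on U near x
    have hev : ∀ᶠ u in nhdsWithin x (U \ {x}),
        |dist (f x) (f u) - md (φ x - φ u)| / dist x u < ε / 4 := by
      refine Filter.eventually_lt_of_limsup_lt ?_ hbddU
      rw [hweak]
      positivity
    rw [eventually_nhdsWithin_iff, Metric.eventually_nhds_iff] at hev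
    obtain ⟨r1, hr1, hev'⟩ := hev
    obtain ⟨r, hr0, hrr1, hrK⟩ : ∃ r : ℝ, 0 < r ∧ 2 * r ≤ r1 ∧ r ≤ 1 / Kr := by
      refine ⟨min (r1 / 2) (1 / Kr), lt_min (by positivity) (by positivity), ?_,
        min_le_right _ _⟩
      have := min_le_left (r1 / 2) (1 / Kr)
      linarith
    have hball : ∀ᶠ y in nhdsWithin x {x}ᶜ, dist y x < r :=
      Filter.Eventually.filter_mono nhdsWithin_le_nhds
        (Metric.eventually_nhds_iff.mpr ⟨r, hr0, fun y hy => hy⟩)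
    filter_upwards [hball, eventually_mem_nhdsWithin, hx K hxA δ hδ0] with y hyr hyx hyA
    have hyx' : y ≠ x := hyx
    have hd : 0 < dist x y := dist_pos.mpr fun h => hyx' h.symm
    -- find an approximating point u ∈ U ∩ lipSet f K
    have hinf : Metric.infDist y (U ∩ lipSet f K) < 2 * δ * dist x y :=
      lt_of_le_of_lt hyA (by nlinarith)
    obtain ⟨u, huA, hdu⟩ := (Metric.infDist_lt_iff ⟨x, hxA⟩).mp hinf
    have ht0 : (0 : ℝ) ≤ dist y u := dist_nonneg
    have ht_half : dist y u < dist x y / 2 := by nlinarith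
    have hxu_le : dist x u ≤ dist x y + dist y u := dist_triangle x y u
    have hux_pos : 0 < dist x u := by
      have h1 : dist x y ≤ dist x u + dist y u := by
        calc dist x y ≤ dist x u + dist u y := dist_triangle x u y
          _ = dist x u + dist y u := by rw [dist_comm u y]
      linarith
    have hune : u ≠ x := fun h => by rw [h] at hux_pos; simp at hux_pos
    have hdr : dist x y < r := by rw [dist_comm]; exact hyr
    have hur1 : dist u x < r1 := by
      rw [dist_comm]
      linarith
    -- apply the weak estimate at u
    have hgu : |dist (f x) (f u) - md (φ x - φ u)| / dist x u < ε / 4 :=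
      hev' hur1 ⟨huA.1, by simpa using hune⟩
    have hterm2 : |dist (f x) (f u) - md (φ x - φ u)| < ε / 4 * dist x u := by
      rwa [div_lt_iff₀ hux_pos] at hgu
    -- Lipschitz bound at u
    have hterm1 : dist (f u) (f y) ≤ Kr * dist y u := by
      have hle : dist u y ≤ 1 / Kr := by
        rw [dist_comm]
        linarith
      have := hKrprop u huA.2 y hle
      rwa [dist_comm u y] at this
    -- seminorm comparison
    have hterm3 : |md (φ x - φ u) - md (φ x - φ y)| ≤ C * Lr * dist y u := by
      have h1 : |md (φ x - φ u) - md (φ x - φ y)| ≤ md ((φ x - φ u) - (φ x - φ y)) := by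
        have := md.norm_sub_map_le_sub (φ x - φ u) (φ x - φ y)
        rwa [Real.norm_eq_abs] at this
      have h2 : (φ x - φ u) - (φ x - φ y) = φ y - φ u := by abel
      rw [h2] at h1
      calc |md (φ x - φ u) - md (φ x - φ y)| ≤ md (φ y - φ u) := h1
        _ ≤ C * ‖φ y - φ u‖ := hC _
        _ = C * dist (φ y) (φ u) := by rw [dist_eq_norm]
        _ ≤ C * (Lr * dist y u) := mul_le_mul_of_nonneg_left (hLrprop y u) hC0
        _ = C * Lr * dist y u := by ring
    -- triangle inequality decomposition
    have htri : |dist (f x) (f y) - md (φ x - φ y)| ≤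
        dist (f u) (f y) + |dist (f x) (f u) - md (φ x - φ u)|
          + |md (φ x - φ u) - md (φ x - φ y)| := by
      have hsplit : dist (f x) (f y) - md (φ x - φ y)
          = (dist (f x) (f y) - dist (f x) (f u)) + (dist (f x) (f u) - md (φ x - φ u))
            + (md (φ x - φ u) - md (φ x - φ y)) := by ring
      have h1 : |dist (f x) (f y) - dist (f x) (f u)| ≤ dist (f u) (f y) := by
        rw [dist_comm (f x) (f y), dist_comm (f x) (f u), dist_comm (f u) (f y)]
        exact abs_dist_sub_le (f y) (f u) (f x)
      calc |dist (f x) (f y) - md (φ x - φ y)|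
          = |(dist (f x) (f y) - dist (f x) (f u)) + (dist (f x) (f u) - md (φ x - φ u))
            + (md (φ x - φ u) - md (φ x - φ y))| := by rw [← hsplit]
        _ ≤ |dist (f x) (f y) - dist (f x) (f u)| + |dist (f x) (f u) - md (φ x - φ u)|
            + |md (φ x - φ u) - md (φ x - φ y)| := abs_add_three _ _ _
        _ ≤ dist (f u) (f y) + |dist (f x) (f u) - md (φ x - φ u)|
            + |md (φ x - φ u) - md (φ x - φ y)| := by linarith
    -- numeric combination
    have e1 : Kr * dist y u + C * Lr * dist y u < ε / 4 * dist x y := by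
      have h1 : Kr * dist y u + C * Lr * dist y u ≤ M * dist y u := by nlinarith
      have h2 : M * dist y u < M * (2 * δ * dist x y) := by
        refine mul_lt_mul_of_pos_left hdu hM0
      have h3 : M * (2 * δ * dist x y) ≤ ε / 4 * dist x y := by
        nlinarith [mul_le_mul_of_nonneg_right hδ1 hd.le]
      linarith
    have e2 : ε / 4 * dist x u ≤ 3 / 8 * (ε * dist x y) := by nlinarith
    have efinal : |dist (f x) (f y) - md (φ x - φ y)| < ε * dist x y := by
      have h5 : ε / 4 * dist x y + 3 / 8 * (ε * dist x y) < ε * dist x y := by nlinarith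
      calc |dist (f x) (f y) - md (φ x - φ y)|
          ≤ dist (f u) (f y) + |dist (f x) (f u) - md (φ x - φ u)|
            + |md (φ x - φ u) - md (φ x - φ y)| := htri
        _ < Kr * dist y u + ε / 4 * dist x u + C * Lr * dist y u := by linarith
        _ < ε / 4 * dist x y + ε / 4 * dist x u := by linarith
        _ ≤ ε / 4 * dist x y + 3 / 8 * (ε * dist x y) := by linarith
        _ < ε * dist x y := h5
    rw [div_lt_iff₀ hd]
    exact efinal
  -- conclude: the limsup is zero
  by_cases hne : (nhdsWithin x {x}ᶜ).NeBot
  · have hg0 : ∀ y, 0 ≤ |dist (f x) (f y) - md (φ x - φ y)| / dist x y :=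
      fun y => div_nonneg (abs_nonneg _) dist_nonneg
    have htend : Tendsto (fun y => |dist (f x) (f y) - md (φ x - φ y)| / dist x y)
        (nhdsWithin x {x}ᶜ) (nhds 0) := by
      rw [Metric.tendsto_nhds]
      intro ε hε
      filter_upwards [key ε hε] with y hy
      rw [Real.dist_0_eq_abs, abs_of_nonneg (hg0 y)]
      exact hy
    exact htend.limsup_eq
  · rw [not_neBot] at hne
    rw [hne, Filter.limsup_eq]
    have hset : {a : ℝ | ∀ᶠ y in (⊥ : Filter X),
        |dist (f x) (f y) - md (φ x - φ y)| / dist x y ≤ a} = Set.univ := by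
      ext a
      simp
    rw [hset]
    apply Real.sInf_of_not_bddBelow
    rintro ⟨b, hb⟩
    have h1 := hb (Set.mem_univ (b - 1))
    linarith
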